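/- For any summary S of a simple graph G determined by a partition of V (with every block containing an internal edge of size ≥ 2), the squared l2-reconstruction error is exactly half the l1-reconstruction error: Σ_{u,v} (Ā(u,v) − A(u,v))² = (1/2) · Σ_{u,v} |Ā(u,v) − A(u,v)|. -/

import Mathlib

/-!
Setting: `A : V → V → ℝ` is the (symmetric, 0/1-valued, zero-diagonal) adjacency matrix
of a finite simple undirected graph `G = (V,E)`, and `P : V → Fin k` assigns each vertex
to its block of the partition `{V_1, …, V_k}`.
-/

open Finset

/-- `n_i`: the number of vertices in block `i`. -/
def blockCard {V : Type*} [Fintype V] {k : ℕ} (P : V → Fin k) (i : Fin k) : ℕ :=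
  (Finset.univ.filter fun v => P v = i).card

/-- `e_i`: the number of edges of `G` with both endpoints in block `i`. -/
noncomputable def eIn {V : Type*} [Fintype V] {k : ℕ} (A : V → V → ℝ) (P : V → Fin k)
    (i : Fin k) : ℝ :=
  (∑ u ∈ Finset.univ.filter (fun v => P v = i),
      ∑ v ∈ Finset.univ.filter (fun v => P v = i), A u v) / 2

/-- `e_{ij}`: the number of edges of `G` between block `i` and block `j` (for `i ≠ j`). -/
noncomputable def eCross {V : Type*} [Fintype V] {k : ℕ} (A : V → V → ℝ) (P : V → Fin k)
    (i j : Fin k) : ℝ :=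
  ∑ u ∈ Finset.univ.filter (fun v => P v = i),
    ∑ v ∈ Finset.univ.filter (fun v => P v = j), A u v

/-- The expected adjacency matrix `Ā` of the summary determined by `P`. -/
noncomputable def Abar {V : Type*} [Fintype V] [DecidableEq V] {k : ℕ}
    (A : V → V → ℝ) (P : V → Fin k) (u v : V) : ℝ :=
  if u = v then 0
  else if P u = P v then eIn A P (P u) / ((blockCard P (P u)).choose 2 : ℝ)
  else eCross A P (P u) (P v) / ((blockCard P (P u) : ℝ) * (blockCard P (P v) : ℝ))

section Aux

variable {V : Type*} [Fintype V] [DecidableEq V] {k : ℕ}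

/-- the constant value of `Abar` on the (off-diagonal part of the) block pair `(i,j)`. -/
noncomputable def cblk (A : V → V → ℝ) (P : V → Fin k) (i j : Fin k) : ℝ :=
  if i = j then eIn A P i / ((blockCard P i).choose 2 : ℝ)
  else eCross A P i j / ((blockCard P i : ℝ) * (blockCard P j : ℝ))

lemma Abar_eq_cblk (A : V → V → ℝ) (P : V → Fin k) {i j : Fin k} {u v : V}
    (hu : P u = i) (hv : P v = j) :
    Abar A P u v = if u = v then 0 else cblk A P i j := by
  subst hu hv
  by_cases h : u = v
  · simp [Abar, h]
  · by_cases hp : P u = P v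
    · simp [Abar, cblk, h, hp]
    · simp [Abar, cblk, h, hp]

lemma sum_split (f : V → V → ℝ) (P : V → Fin k) :
    ∑ u : V, ∑ v : V, f u v
      = ∑ i : Fin k, ∑ j : Fin k, ∑ u ∈ Finset.univ.filter (fun v => P v = i),
          ∑ v ∈ Finset.univ.filter (fun v => P v = j), f u v := by
  calc ∑ u : V, ∑ v : V, f u v
      = ∑ i : Fin k, ∑ u ∈ Finset.univ.filter (fun v => P v = i), ∑ v : V, f u v :=
        (Finset.sum_fiberwise (Finset.univ : Finset V) P (fun u => ∑ v : V, f u v)).symm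
    _ = ∑ i : Fin k, ∑ u ∈ Finset.univ.filter (fun v => P v = i),
          ∑ j : Fin k, ∑ v ∈ Finset.univ.filter (fun v => P v = j), f u v := by
        refine Finset.sum_congr rfl fun i _ => Finset.sum_congr rfl fun u _ => ?_
        exact (Finset.sum_fiberwise (Finset.univ : Finset V) P (fun v => f u v)).symm
    _ = ∑ i : Fin k, ∑ j : Fin k, ∑ u ∈ Finset.univ.filter (fun v => P v = i),
          ∑ v ∈ Finset.univ.filter (fun v => P v = j), f u v :=
        Finset.sum_congr rfl fun i _ => Finset.sum_comm

lemma sum_offdiag_const (s : Finset V) (c : ℝ) :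
    ∑ u ∈ s, ∑ v ∈ s, (if u = v then (0:ℝ) else c)
      = ((s.card : ℝ) * s.card - s.card) * c := by
  have inner : ∀ u ∈ s, ∑ v ∈ s, (if u = v then (0:ℝ) else c) = s.card * c - c := by
    intro u hu
    have h : ∀ v, (if u = v then (0:ℝ) else c) = c - (if u = v then c else 0) := by
      intro v; by_cases h : u = v <;> simp [h]
    simp_rw [h]
    rw [Finset.sum_sub_distrib, Finset.sum_const, Finset.sum_ite_eq, if_pos hu,
      nsmul_eq_mul]
  rw [Finset.sum_congr rfl inner, Finset.sum_sub_distrib, Finset.sum_const,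
    Finset.sum_const, nsmul_eq_mul, nsmul_eq_mul]
  ring

end Aux

theorem l2_squared_eq_half_l1 {V : Type*} [Fintype V] [DecidableEq V] {k : ℕ}
    (A : V → V → ℝ) (P : V → Fin k)
    (hsym : ∀ u v, A u v = A v u)
    (h01 : ∀ u v, A u v = 0 ∨ A u v = 1)
    (hdiag : ∀ u, A u u = 0)
    (hnd : ∀ i : Fin k, eIn A P i ≠ 0 → 2 ≤ blockCard P i) :
    ∑ u : V, ∑ v : V, (Abar A P u v - A u v) ^ 2
      = (1 / 2) * ∑ u : V, ∑ v : V, |Abar A P u v - A u v| := by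
  classical
  set B : Fin k → Finset V := fun i => Finset.univ.filter (fun v => P v = i) with hB
  have hmem : ∀ {w : V} {l : Fin k}, w ∈ B l → P w = l := by
    intro w l hw; simpa [hB] using hw
  have hmem' : ∀ w : V, w ∈ B (P w) := by intro w; simp [hB]
  have hcard : ∀ i, (B i).card = blockCard P i := by intro i; simp [hB, blockCard]
  have hA0 : ∀ u v, 0 ≤ A u v := fun u v => by rcases h01 u v with h | h <;> simp [h]
  have hA1 : ∀ u v, A u v ≤ 1 := fun u v => by rcases h01 u v with h | h <;> simp [h]
  have hAb : ∀ (s t : Finset V), ∑ u ∈ s, ∑ v ∈ t, A u v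
      ≤ ∑ u ∈ s, ∑ v ∈ t, if u = v then (0:ℝ) else 1 := by
    intro s t
    refine Finset.sum_le_sum fun u _ => Finset.sum_le_sum fun v _ => ?_
    by_cases h : u = v
    · subst h; simp [hdiag u]
    · simpa [h] using hA1 u v
  -- per-pair: the sum of A over the pair
  have hsumA : ∀ i j : Fin k, ∑ u ∈ B i, ∑ v ∈ B j, A u v
      = if i = j then 2 * eIn A P i else eCross A P i j := by
    intro i j
    by_cases h : i = j
    · subst h
      rw [if_pos rfl, eIn]
      simp only [hB]
      ring
    · simp [eCross, hB, h]
  -- per-pair sums of Abar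
  have hsumAbar : ∀ i j : Fin k, ∑ u ∈ B i, ∑ v ∈ B j, Abar A P u v
      = ∑ u ∈ B i, ∑ v ∈ B j, A u v := by
    intro i j
    by_cases h : i = j
    · subst h
      have h1 : ∑ u ∈ B i, ∑ v ∈ B i, Abar A P u v
          = ((B i).card * (B i).card - (B i).card : ℝ) * cblk A P i i := by
        rw [← sum_offdiag_const (B i) (cblk A P i i)]
        exact Finset.sum_congr rfl fun u hu => Finset.sum_congr rfl fun v hv =>
          Abar_eq_cblk A P (hmem hu) (hmem hv)
      rw [h1, hsumA i i, if_pos rfl]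
      by_cases he : eIn A P i = 0
      · simp [cblk, he]
      · have hn : 2 ≤ blockCard P i := hnd i he
        have hn2 : (2:ℝ) ≤ (blockCard P i : ℝ) := by exact_mod_cast hn
        rw [cblk, if_pos rfl, Nat.cast_choose_two, hcard]
        have h1 : ((blockCard P i : ℝ)) ≠ 0 := by linarith
        have h2 : ((blockCard P i : ℝ)) - 1 ≠ 0 := by
          intro hc; nlinarith
        field_simp
    · have hval : ∀ u ∈ B i, ∀ v ∈ B j, Abar A P u v = cblk A P i j := by
        intro u hu v hv
        have huv : u ≠ v := fun e => h (by rw [← hmem hu, ← hmem hv, e])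
        rw [Abar_eq_cblk A P (hmem hu) (hmem hv), if_neg huv]
      have hL : ∑ u ∈ B i, ∑ v ∈ B j, Abar A P u v
          = ((B i).card : ℝ) * (((B j).card : ℝ) * cblk A P i j) := by
        rw [Finset.sum_congr rfl (fun u hu => Finset.sum_congr rfl (hval u hu))]
        simp [Finset.sum_const, nsmul_eq_mul, mul_assoc]
      rw [hL, hsumA i j, if_neg h]
      have hec : eCross A P i j = ∑ u ∈ B i, ∑ v ∈ B j, A u v := rfl
      rcases Nat.eq_zero_or_pos (blockCard P i) with h0 | hposi
      · have hBi : B i = ∅ := Finset.card_eq_zero.mp (by rw [hcard]; exact h0)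
        rw [hec, hBi]; simp
      rcases Nat.eq_zero_or_pos (blockCard P j) with h0 | hposj
      · have hBj : B j = ∅ := Finset.card_eq_zero.mp (by rw [hcard]; exact h0)
        rw [hec, hBj]; simp
      · rw [cblk, if_neg h, hcard, hcard]
        have h1 : ((blockCard P i : ℝ)) ≠ 0 := by positivity
        have h2 : ((blockCard P j : ℝ)) ≠ 0 := by positivity
        field_simp
  -- bounds on Abar
  have hc0 : ∀ i j, 0 ≤ cblk A P i j := by
    intro i j
    have hs : ∀ (s t : Finset V), 0 ≤ ∑ u ∈ s, ∑ v ∈ t, A u v :=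
      fun s t => Finset.sum_nonneg fun u _ => Finset.sum_nonneg fun v _ => hA0 u v
    rw [cblk]
    by_cases h : i = j
    · rw [if_pos h]
      apply div_nonneg
      · rw [eIn]
        have := hs (Finset.univ.filter (fun v => P v = i)) (Finset.univ.filter (fun v => P v = i))
        linarith
      · exact Nat.cast_nonneg _
    · rw [if_neg h]
      apply div_nonneg
      · rw [eCross]; exact hs _ _
      · exact mul_nonneg (Nat.cast_nonneg _) (Nat.cast_nonneg _)
  have hb0 : ∀ u v, 0 ≤ Abar A P u v := by
    intro u v
    rw [Abar_eq_cblk A P rfl rfl]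
    by_cases h : u = v
    · simp [h]
    · simpa [h] using hc0 (P u) (P v)
  have hb1 : ∀ u v, Abar A P u v ≤ 1 := by
    intro u v
    rw [Abar_eq_cblk A P rfl rfl]
    by_cases h : u = v
    · simp [h]
    rw [if_neg h, cblk]
    by_cases hp : P u = P v
    · rw [if_pos hp]
      by_cases he : eIn A P (P u) = 0
      · simp [he]
      have hn : 2 ≤ blockCard P (P u) := hnd _ he
      have hn2 : (2:ℝ) ≤ (blockCard P (P u) : ℝ) := by exact_mod_cast hn
      have hpos : (0:ℝ) < ((blockCard P (P u)).choose 2 : ℝ) := by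
        rw [Nat.cast_choose_two]; nlinarith
      rw [div_le_one hpos, Nat.cast_choose_two]
      have := hAb (B (P u)) (B (P u))
      rw [sum_offdiag_const, hcard] at this
      rw [eIn]
      have heq : (∑ u_1 ∈ Finset.univ.filter (fun v => P v = P u),
          ∑ v ∈ Finset.univ.filter (fun v => P v = P u), A u_1 v)
          = ∑ a ∈ B (P u), ∑ b ∈ B (P u), A a b := rfl
      rw [heq]
      nlinarith [this]
    · rw [if_neg hp]
      have hi : 1 ≤ blockCard P (P u) := by
        rw [← hcard]; exact Finset.card_pos.mpr ⟨u, hmem' u⟩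
      have hj : 1 ≤ blockCard P (P v) := by
        rw [← hcard]; exact Finset.card_pos.mpr ⟨v, hmem' v⟩
      have hi' : (0:ℝ) < (blockCard P (P u) : ℝ) := by exact_mod_cast hi
      have hj' : (0:ℝ) < (blockCard P (P v) : ℝ) := by exact_mod_cast hj
      rw [div_le_one (by positivity)]
      have hle : eCross A P (P u) (P v) ≤ ∑ a ∈ B (P u), ∑ b ∈ B (P v), (1:ℝ) := by
        refine le_trans (le_of_eq rfl) ?_
        exact Finset.sum_le_sum fun a _ => Finset.sum_le_sum fun b _ => hA1 a b
      calc eCross A P (P u) (P v) ≤ ∑ a ∈ B (P u), ∑ b ∈ B (P v), (1:ℝ) := hle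
        _ = (blockCard P (P u) : ℝ) * (blockCard P (P v) : ℝ) := by
            simp [Finset.sum_const, nsmul_eq_mul, hcard]
  -- key sum identities
  have L1 : ∑ u : V, ∑ v : V, Abar A P u v = ∑ u : V, ∑ v : V, A u v := by
    rw [sum_split (Abar A P) P, sum_split A P]
    exact Finset.sum_congr rfl fun i _ => Finset.sum_congr rfl fun j _ => hsumAbar i j
  have L2 : ∑ u : V, ∑ v : V, Abar A P u v * Abar A P u v
      = ∑ u : V, ∑ v : V, Abar A P u v * A u v := by
    rw [sum_split (fun u v => Abar A P u v * Abar A P u v) P,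
      sum_split (fun u v => Abar A P u v * A u v) P]
    refine Finset.sum_congr rfl fun i _ => Finset.sum_congr rfl fun j _ => ?_
    have e1 : ∀ u ∈ B i, ∀ v ∈ B j, Abar A P u v * Abar A P u v
        = cblk A P i j * Abar A P u v := by
      intro u hu v hv
      rw [Abar_eq_cblk A P (hmem hu) (hmem hv)]
      by_cases h : u = v <;> simp [h, mul_comm]
    have e2 : ∀ u ∈ B i, ∀ v ∈ B j, Abar A P u v * A u v
        = cblk A P i j * A u v := by
      intro u hu v hv
      rw [Abar_eq_cblk A P (hmem hu) (hmem hv)]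
      by_cases h : u = v
      · simp [h, hdiag v]
      · simp [h]
    calc ∑ u ∈ B i, ∑ v ∈ B j, Abar A P u v * Abar A P u v
        = cblk A P i j * ∑ u ∈ B i, ∑ v ∈ B j, Abar A P u v := by
          rw [Finset.mul_sum]
          refine Finset.sum_congr rfl fun u hu => ?_
          rw [Finset.mul_sum]
          exact Finset.sum_congr rfl fun v hv => e1 u hu v hv
      _ = cblk A P i j * ∑ u ∈ B i, ∑ v ∈ B j, A u v := by rw [hsumAbar i j]
      _ = ∑ u ∈ B i, ∑ v ∈ B j, Abar A P u v * A u v := by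
          rw [Finset.mul_sum]
          refine Finset.sum_congr rfl fun u hu => ?_
          rw [Finset.mul_sum]
          exact (Finset.sum_congr rfl fun v hv => (e2 u hu v hv)).symm
  -- pointwise identities
  have hsq : ∀ u v, (Abar A P u v - A u v) ^ 2
      = Abar A P u v * Abar A P u v - 2 * (Abar A P u v * A u v) + A u v := by
    intro u v
    have : A u v * A u v = A u v := by rcases h01 u v with h | h <;> simp [h]
    nlinarith [this]
  have habs : ∀ u v, |Abar A P u v - A u v|
      = Abar A P u v + A u v - 2 * (Abar A P u v * A u v) := by
    intro u v
    rcases h01 u v with h | h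
    · rw [h, sub_zero, abs_of_nonneg (hb0 u v)]; ring
    · rw [h, abs_of_nonpos (by linarith [hb1 u v])]; ring
  simp_rw [hsq, habs]
  rw [Finset.sum_congr rfl (fun u _ => Finset.sum_add_distrib),
    Finset.sum_add_distrib,
    Finset.sum_congr rfl (fun u (_ : u ∈ Finset.univ) =>
      Finset.sum_sub_distrib (f := fun v => Abar A P u v * Abar A P u v)
        (g := fun v => 2 * (Abar A P u v * A u v))),
    Finset.sum_sub_distrib]
  rw [Finset.sum_congr rfl (fun u (_ : u ∈ Finset.univ) =>
      Finset.sum_sub_distrib (f := fun v => Abar A P u v + A u v)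
        (g := fun v => 2 * (Abar A P u v * A u v))),
    Finset.sum_sub_distrib,
    Finset.sum_congr rfl (fun u (_ : u ∈ Finset.univ) =>
      Finset.sum_add_distrib (f := fun v => Abar A P u v) (g := fun v => A u v)),
    Finset.sum_add_distrib]
  simp_rw [← Finset.mul_sum]
  rw [L1, L2]
  ring
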